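/- arXiv:1302.5536 — 2 statements merged into one kernel-verified Lean document; each statement's English description precedes it below -/
import Mathlib

section
/- Let w, z ∈ ℂ and n ∈ ℕ. Then |S_{w,n+1}(z)| ≥ τ(w,z)ⁿ · (√(τ(w,z)² + (Im w)²) − |Im w|), where τ(w,z) = √|Δ_w(z)|, S_{w,2m}(z) = Δ_w(z)^m, and S_{w,2m+1}(z) = Δ_w(z)^m (z−w). -/
/-- The characteristic polynomial `Δ_w(z) = (z-w)(z-conj w)`. -/
noncomputable def Delta (w z : ℂ) : ℂ := (z - w) * (z - (starRingEnd ℂ) w)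

/-- The Cassini pseudo-metric `τ(w,z) = √|Δ_w(z)|`. -/
noncomputable def tau (w z : ℂ) : ℝ := Real.sqrt ‖Delta w z‖

/-- The complex spherical polynomials: `S_{w,2m}(z) = Δ_w(z)^m`,
`S_{w,2m+1}(z) = Δ_w(z)^m (z−w)`. -/
noncomputable def Sph (w : ℂ) (n : ℕ) (z : ℂ) : ℂ :=
  Delta w z ^ (n / 2) * (if n % 2 = 1 then z - w else 1)

/-- Lower bound for the spherical polynomials:
`|S_{w,n+1}(z)| ≥ τ(w,z)ⁿ·(√(τ(w,z)² + (Im w)²) − |Im w|)`. -/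
theorem sph_abs_ge (w z : ℂ) (n : ℕ) :
    tau w z ^ n * (Real.sqrt (tau w z ^ 2 + w.im ^ 2) - |w.im|)
      ≤ ‖Sph w (n + 1) z‖ := by
  set a := ‖z - w‖ with ha
  set c := ‖z - (starRingEnd ℂ) w‖ with hc
  set b := |w.im| with hbdef
  have ha0 : 0 ≤ a := norm_nonneg _
  have hc0 : 0 ≤ c := norm_nonneg _
  have hb0 : 0 ≤ b := abs_nonneg _
  have habs : ‖Delta w z‖ = a * c := by
    simp [Delta, map_mul, ha, hc]
  have ht0 : 0 ≤ tau w z := Real.sqrt_nonneg _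
  have ht2 : tau w z ^ 2 = a * c := by
    rw [tau, Real.sq_sqrt (by positivity), habs]
  have hb2 : b ^ 2 = w.im ^ 2 := sq_abs _
  have hca : c ≤ a + 2 * b := by
    have h1 : z - (starRingEnd ℂ) w = (z - w) + (w - (starRingEnd ℂ) w) := by ring
    have h2 : ‖w - (starRingEnd ℂ) w‖ = 2 * b := by
      have h3 : w - (starRingEnd ℂ) w = ((2 * w.im : ℝ) : ℂ) * Complex.I := by
        apply Complex.ext <;>
          simp [Complex.sub_re, Complex.sub_im, Complex.conj_re, Complex.conj_im] <;> ring
      rw [h3, norm_mul, Complex.norm_I, Complex.norm_real, Real.norm_eq_abs, mul_one, abs_mul]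
      norm_num [hbdef]
    calc c = ‖(z - w) + (w - (starRingEnd ℂ) w)‖ := by rw [hc, ← h1]
    _ ≤ a + 2 * b := by
        refine (norm_add_le _ _).trans ?_
        rw [h2]
    _ ≤ a + 2 * b := le_refl _
  rcases Nat.even_or_odd n with ⟨k, hk⟩ | ⟨k, hk⟩
  · -- n = 2k even, n+1 odd: |Sph| = (a*c)^k * a = t^n * a
    have hdiv : (n + 1) / 2 = k := by omega
    have hmod : (n + 1) % 2 = 1 := by omega
    have hS : ‖Sph w (n + 1) z‖ = (a * c) ^ k * a := by
      rw [Sph, hdiv, hmod]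
      simp [map_mul, map_pow, habs, ha]
    have htn : tau w z ^ n * a = (a * c) ^ k * a := by
      have : tau w z ^ n = (tau w z ^ 2) ^ k := by
        rw [← pow_mul]; congr 1; omega
      rw [this, ht2]
    rw [hS, ← htn]
    refine mul_le_mul_of_nonneg_left ?_ (by positivity)
    have hsq : tau w z ^ 2 + w.im ^ 2 ≤ (a + b) ^ 2 := by
      rw [ht2, ← hb2]; nlinarith
    have := Real.sqrt_le_sqrt hsq
    rw [Real.sqrt_sq (by positivity)] at this
    linarith
  · -- n = 2k+1 odd, n+1 even: |Sph| = (a*c)^(k+1) = t^(n+1)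
    have hdiv : (n + 1) / 2 = k + 1 := by omega
    have hS : ‖Sph w (n + 1) z‖ = (a * c) ^ (k + 1) := by
      rw [Sph, hdiv, if_neg (by omega : ¬ (n + 1) % 2 = 1)]
      simp [map_mul, map_pow, habs]
    have htn : tau w z ^ n * tau w z = (a * c) ^ (k + 1) := by
      have : tau w z ^ n * tau w z = (tau w z ^ 2) ^ (k + 1) := by
        rw [← pow_succ, ← pow_mul]; congr 1; omega
      rw [this, ht2]
    rw [hS, ← htn]
    refine mul_le_mul_of_nonneg_left ?_ (by positivity)
    have hsq : tau w z ^ 2 + w.im ^ 2 ≤ (tau w z + b) ^ 2 := by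
      rw [← hb2]; nlinarith
    have := Real.sqrt_le_sqrt hsq
    rw [Real.sqrt_sq (by positivity)] at this
    linarith
end

section
/- Let w, z, ζ ∈ ℂ with τ(w,ζ) > τ(w,z), where τ(w,z) = √|Δ_w(z)|. Then |ζ − z| ≥ (τ(w,ζ) − τ(w,z))² / (3 τ(w,ζ) + 2 |Im w|). -/
lemma tau_nonneg (w z : ℂ) : 0 ≤ tau w z := Real.sqrt_nonneg _

lemma tau_sq (w z : ℂ) : tau w z ^ 2 = ‖Delta w z‖ := by
  rw [tau, Real.sq_sqrt (norm_nonneg _)]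

lemma Delta_eq (w u : ℂ) : Delta w u = (u - (w.re : ℂ)) ^ 2 + (w.im : ℂ) ^ 2 := by
  have h1 : (w.re : ℂ) + (w.im : ℂ) * Complex.I = w := Complex.re_add_im w
  have h2 : Complex.I ^ 2 = -1 := Complex.I_sq
  have hc : (starRingEnd ℂ) w = (w.re : ℂ) - (w.im : ℂ) * Complex.I := by
    simp [Complex.ext_iff]
  unfold Delta
  rw [hc]
  linear_combination (u - (w.re : ℂ) + (w.im : ℂ) * Complex.I) * h1 - (w.im : ℂ)^2 * h2

lemma abs_sub_re_le (w u : ℂ) : ‖u - (w.re : ℂ)‖ ≤ tau w u + |w.im| := by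
  have h : ‖u - (w.re : ℂ)‖ ^ 2 ≤ (tau w u + |w.im|) ^ 2 := by
    have h1 : ‖u - (w.re : ℂ)‖ ^ 2
        = ‖(u - (w.re : ℂ)) ^ 2‖ := by rw [norm_pow]
    have h2 : (u - (w.re : ℂ)) ^ 2 = Delta w u - (w.im : ℂ) ^ 2 := by
      rw [Delta_eq]; ring
    have h3 : ‖(u - (w.re : ℂ)) ^ 2‖
        ≤ ‖Delta w u‖ + ‖(w.im : ℂ) ^ 2‖ := by
      rw [h2]; exact (norm_sub_le _ _).trans (by rfl)
    have h4 : ‖(w.im : ℂ) ^ 2‖ = |w.im| ^ 2 := by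
      rw [norm_pow, Complex.norm_real, Real.norm_eq_abs]
    have h5 : ‖Delta w u‖ = tau w u ^ 2 := (tau_sq w u).symm
    nlinarith [tau_nonneg w u, abs_nonneg w.im, h1, h3]
  have := abs_nonneg w.im
  have := tau_nonneg w u
  nlinarith [norm_nonneg (u - (w.re : ℂ))]

/-- If `τ(w,ζ) > τ(w,z)` then
`|ζ − z| ≥ (τ(w,ζ) − τ(w,z))² / (3τ(w,ζ) + 2|Im w|)`. -/
theorem abs_sub_ge_of_tau_lt (w z ζ : ℂ) (h : tau w z < tau w ζ) :
    (tau w ζ - tau w z) ^ 2 / (3 * tau w ζ + 2 * |w.im|) ≤ ‖ζ - z‖ := by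
  set s := tau w z with hs
  set t := tau w ζ with ht
  have hs0 : 0 ≤ s := tau_nonneg w z
  have ht0 : 0 < t := lt_of_le_of_lt hs0 h
  have hden : 0 < 3 * t + 2 * |w.im| := by positivity
  have key : Delta w ζ - Delta w z = (ζ - z) * ((ζ - (w.re : ℂ)) + (z - (w.re : ℂ))) := by
    rw [Delta_eq, Delta_eq]; ring
  have hdiff : t ^ 2 - s ^ 2 ≤ ‖ζ - z‖ * ((t + |w.im|) + (s + |w.im|)) := by
    have h1 : ‖Delta w ζ‖ - ‖Delta w z‖
        ≤ ‖Delta w ζ - Delta w z‖ := by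
      have h2 := norm_add_le (Delta w ζ - Delta w z) (Delta w z)
      simp only [sub_add_cancel] at h2
      linarith
    have h3 : ‖Delta w ζ - Delta w z‖
        ≤ ‖ζ - z‖ * ((t + |w.im|) + (s + |w.im|)) := by
      rw [key, norm_mul]
      apply mul_le_mul_of_nonneg_left _ (norm_nonneg _)
      calc ‖(ζ - (w.re : ℂ)) + (z - (w.re : ℂ))‖
          ≤ ‖ζ - (w.re : ℂ)‖ + ‖z - (w.re : ℂ)‖ :=
            norm_add_le _ _
        _ ≤ (t + |w.im|) + (s + |w.im|) :=
            add_le_add (abs_sub_re_le w ζ) (abs_sub_re_le w z)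
    have h4 := tau_sq w ζ
    have h5 := tau_sq w z
    rw [← ht] at h4; rw [← hs] at h5
    linarith [h1, h3]
  rw [div_le_iff₀ hden]
  have habs : 0 ≤ ‖ζ - z‖ := norm_nonneg _
  nlinarith [hdiff, mul_le_mul_of_nonneg_left (show s ≤ t from le_of_lt h) habs,
    abs_nonneg w.im]
end
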